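/- Let k be a field of characteristic 2, K = k(s), and M the k[x,y]/(x²,y²)-module with basis {u_i, v_i : i ≥ 0} as above. On Hom_k(K, M) with the action ((x+sy)·f)(a) = x·f(a) + y·f(sa), the k-linear map f : K → M sending a rational function φ with polynomial part α_0 + α_1 s + α_2 s² + ⋯ (from its partial fraction decomposition) to α_0 u_0 + α_1 u_1 + ⋯ lies in the kernel of x + sy but not in the image of x + sy. In particular the kernel of x + sy on Hom_k(K,M) strictly contains its image. -/

import Mathlib

/-- The underlying space of the Klein-four module `M` with basis `{uᵢ, vᵢ : i ≥ 0}`. -/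
abbrev KleinM (k : Type*) [Field k] := ((ℕ →₀ k) × (ℕ →₀ k))

/-- Multiplication by `x`: `x·uᵢ = vᵢ`, `x·vᵢ = 0`. -/
noncomputable def opX (k : Type*) [Field k] : KleinM k →ₗ[k] KleinM k :=
  (LinearMap.inr k (ℕ →₀ k) (ℕ →₀ k)).comp (LinearMap.fst k (ℕ →₀ k) (ℕ →₀ k))

/-- Multiplication by `y`: `y·uᵢ = vᵢ₋₁` (with `v₋₁ = 0`), `y·vᵢ = 0`. -/
noncomputable def opY (k : Type*) [Field k] : KleinM k →ₗ[k] KleinM k :=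
  ((LinearMap.inr k (ℕ →₀ k) (ℕ →₀ k)).comp
    (Finsupp.lcomapDomain (fun n => n + 1) (add_left_injective 1))).comp
    (LinearMap.fst k (ℕ →₀ k) (ℕ →₀ k))

/-- Multiplication by `x + sy` on `Hom_k(K, M)`, `K = k(s)`:
`((x+sy)·f)(a) = x·f(a) + y·f(s·a)`. -/
noncomputable def opXsY (k : Type*) [Field k] :
    (RatFunc k →ₗ[k] KleinM k) → (RatFunc k →ₗ[k] KleinM k) := fun f =>
  (opX k).comp f + (opY k).comp (f.comp (LinearMap.mulLeft k (RatFunc.X : RatFunc k)))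

section Aux
open Polynomial
variable {k : Type*} [Field k]

noncomputable def polyPart (φ : RatFunc k) : k[X] := φ.num /ₘ φ.denom

local notation "am" => algebraMap (Polynomial k) (RatFunc k)

def IsNP (r : RatFunc k) : Prop :=
  ∃ a b : k[X], b ≠ 0 ∧ a.degree ≤ b.degree ∧ r = am a / am b

def IsP (r : RatFunc k) : Prop :=
  ∃ a b : k[X], b ≠ 0 ∧ a.degree < b.degree ∧ r = am a / am b

lemma IsP.isNP {r : RatFunc k} (h : IsP r) : IsNP r := by
  obtain ⟨a, b, hb, hd, he⟩ := h
  exact ⟨a, b, hb, hd.le, he⟩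

lemma am_ne {b : k[X]} (hb : b ≠ 0) : am b ≠ 0 := by
  simpa using (RatFunc.algebraMap_ne_zero hb)

lemma combine {a b a' b' : k[X]} (hb : b ≠ 0) (hb' : b' ≠ 0) :
    am a / am b + am a' / am b' = am (a * b' + b * a') / am (b * b') := by
  rw [div_add_div _ _ (am_ne hb) (am_ne hb'), ← map_mul, ← map_mul, ← map_mul, ← map_add]

lemma deg_ne_bot {b : k[X]} (hb : b ≠ 0) : b.degree ≠ ⊥ := by
  simpa [degree_eq_bot] using hb

lemma IsNP.add {r r' : RatFunc k} (h : IsNP r) (h' : IsNP r') : IsNP (r + r') := by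
  obtain ⟨a, b, hb, hd, rfl⟩ := h
  obtain ⟨a', b', hb', hd', rfl⟩ := h'
  refine ⟨a * b' + b * a', b * b', mul_ne_zero hb hb', ?_, combine hb hb'⟩
  refine le_trans (degree_add_le _ _) (max_le ?_ ?_)
  · rw [degree_mul, degree_mul]; exact add_le_add_left hd _
  · rw [degree_mul, degree_mul]; exact add_le_add_right hd' _

lemma IsP.add {r r' : RatFunc k} (h : IsP r) (h' : IsP r') : IsP (r + r') := by
  obtain ⟨a, b, hb, hd, rfl⟩ := h
  obtain ⟨a', b', hb', hd', rfl⟩ := h'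
  refine ⟨a * b' + b * a', b * b', mul_ne_zero hb hb', ?_, combine hb hb'⟩
  refine lt_of_le_of_lt (degree_add_le _ _) (max_lt ?_ ?_)
  · rw [degree_mul, degree_mul]
    exact WithBot.add_lt_add_right (deg_ne_bot hb') hd
  · rw [degree_mul, degree_mul]
    exact WithBot.add_lt_add_left (deg_ne_bot hb) hd'

lemma IsP.neg {r : RatFunc k} (h : IsP r) : IsP (-r) := by
  obtain ⟨a, b, hb, hd, rfl⟩ := h
  exact ⟨-a, b, hb, by simpa using hd, by rw [map_neg, neg_div]⟩

lemma IsNP.neg {r : RatFunc k} (h : IsNP r) : IsNP (-r) := by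
  obtain ⟨a, b, hb, hd, rfl⟩ := h
  exact ⟨-a, b, hb, by simpa using hd, by rw [map_neg, neg_div]⟩

lemma am_smul (c : k) (p : k[X]) : am (c • p) = c • am p := by
  rw [Polynomial.smul_eq_C_mul, map_mul, Algebra.smul_def,
    IsScalarTower.algebraMap_apply k (Polynomial k) (RatFunc k), Polynomial.algebraMap_eq]

lemma IsP.smul (c : k) {r : RatFunc k} (h : IsP r) : IsP (c • r) := by
  obtain ⟨a, b, hb, hd, rfl⟩ := h
  refine ⟨c • a, b, hb, lt_of_le_of_lt (degree_smul_le _ _) hd, ?_⟩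
  rw [am_smul, smul_div_assoc]

lemma IsP.zero : IsP (0 : RatFunc k) :=
  ⟨0, 1, one_ne_zero, by simp, by simp⟩

lemma IsP.X_mul {r : RatFunc k} (h : IsP r) : IsNP (RatFunc.X * r) := by
  obtain ⟨a, b, hb, hd, rfl⟩ := h
  refine ⟨X * a, b, hb, ?_, ?_⟩
  · rcases eq_or_ne a 0 with rfl | ha
    · simp
    · rw [degree_mul, degree_X, degree_eq_natDegree ha, degree_eq_natDegree hb] at *
      have : a.natDegree < b.natDegree := by exact_mod_cast hd
      exact_mod_cast Nat.one_add_le_iff.mpr this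
  · rw [map_mul, RatFunc.algebraMap_X, mul_div_assoc]

lemma myMulEqOfEqDiv {d a b : k[X]} (hb : b ≠ 0) (he : am d = am a / am b) :
    d * b = a := by
  have h2 := (div_eq_iff (am_ne hb)).mp he.symm
  exact RatFunc.algebraMap_injective k (by rw [map_mul]; exact h2.symm)

lemma eq_zero_of_isP {d : k[X]} (h : IsP (am d)) : d = 0 := by
  obtain ⟨a, b, hb, hd, he⟩ := h
  have hmul := myMulEqOfEqDiv hb he
  by_contra hd0
  rcases eq_or_ne a 0 with rfl | ha
  · exact hd0 (by simpa [hb] using hmul)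
  · have hdeg : a.degree = d.degree + b.degree := by rw [← hmul, degree_mul]
    rw [hdeg] at hd
    have h0 : (0 : WithBot ℕ) ≤ d.degree := zero_le_degree_iff.mpr hd0
    have : b.degree ≤ d.degree + b.degree := by
      nth_rewrite 1 [← zero_add b.degree]
      exact add_le_add_left h0 _
    exact absurd hd (not_lt.mpr this)

lemma coeff_eq_zero_of_isNP {d : k[X]} (h : IsNP (am d)) (n : ℕ) :
    d.coeff (n + 1) = 0 := by
  obtain ⟨a, b, hb, hd, he⟩ := h
  have hmul := myMulEqOfEqDiv hb he
  rcases eq_or_ne d 0 with rfl | hd0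
  · simp
  rcases eq_or_ne a 0 with rfl | ha
  · exact absurd (by simpa [hb] using hmul) hd0
  · have hdeg : a.degree = d.degree + b.degree := by rw [← hmul, degree_mul]
    have hnd : d.natDegree = 0 := by
      by_contra hnd
      have h1 : (1 : WithBot ℕ) ≤ d.degree := by
        rw [degree_eq_natDegree hd0]
        exact_mod_cast Nat.one_le_iff_ne_zero.mpr hnd
      have h2 : b.degree + 1 ≤ a.degree := by
        rw [hdeg, add_comm d.degree]
        exact add_le_add_right h1 _
      have hb1 : b.degree < b.degree + 1 := by
        rw [degree_eq_natDegree hb]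
        exact_mod_cast lt_add_one b.natDegree
      exact absurd hd (not_le.mpr (lt_of_lt_of_le hb1 h2))
    exact coeff_eq_zero_of_natDegree_lt (by omega)

lemma isP_sub_polyPart (φ : RatFunc k) : IsP (φ - am (polyPart φ)) := by
  have hden := am_ne (φ.denom_ne_zero (K := k))
  refine ⟨φ.num %ₘ φ.denom, φ.denom, φ.denom_ne_zero,
    degree_modByMonic_lt _ φ.monic_denom, ?_⟩
  have h1 : φ * am φ.denom = am φ.num := by
    nth_rewrite 1 [← RatFunc.num_div_denom φ]
    rw [div_mul_cancel₀ _ hden]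
  rw [eq_div_iff hden, sub_mul, h1, ← map_mul, ← map_sub]
  congr 1
  have h := Polynomial.modByMonic_add_div φ.num φ.denom
  rw [polyPart]
  linear_combination -h

lemma polyPart_add (φ ψ : RatFunc k) :
    polyPart (φ + ψ) = polyPart φ + polyPart ψ := by
  have h : IsP (am (polyPart (φ + ψ) - (polyPart φ + polyPart ψ))) := by
    have := ((isP_sub_polyPart φ).add (isP_sub_polyPart ψ)).add
      (isP_sub_polyPart (φ + ψ)).neg
    convert this using 1
    rw [map_sub, map_add]
    ring
  have := eq_zero_of_isP h
  linear_combination this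

lemma polyPart_smul (c : k) (φ : RatFunc k) :
    polyPart (c • φ) = c • polyPart φ := by
  have h : IsP (am (polyPart (c • φ) - c • polyPart φ)) := by
    have := ((isP_sub_polyPart φ).smul c).add (isP_sub_polyPart (c • φ)).neg
    convert this using 1
    rw [map_sub, am_smul, smul_sub]
    ring
  have := eq_zero_of_isP h
  linear_combination this

lemma polyPart_X_mul_coeff (φ : RatFunc k) (n : ℕ) :
    (polyPart (RatFunc.X * φ)).coeff (n + 1) = (polyPart φ).coeff n := by
  have h : IsNP (am (polyPart (RatFunc.X * φ) - X * polyPart φ)) := by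
    have := (isP_sub_polyPart (RatFunc.X * φ)).isNP.neg.add (isP_sub_polyPart φ).X_mul
    convert this using 1
    rw [map_sub, map_mul, RatFunc.algebraMap_X]
    ring
  have h2 := coeff_eq_zero_of_isNP h n
  rw [coeff_sub, coeff_X_mul] at h2
  linear_combination h2

end Aux

/-- The `k`-linear map `f : K → M` sending a rational function `φ` with polynomial part
`α₀ + α₁s + α₂s² + ⋯` (from its partial fraction decomposition) to `α₀u₀ + α₁u₁ + ⋯`
lies in the kernel of `x + sy` but not in its image. -/
theorem stmt12 (k : Type*) [Field k] [CharP k 2] :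
    ∃ f : RatFunc k →ₗ[k] KleinM k,
      (∀ φ : RatFunc k, f φ = (((φ.num /ₘ φ.denom).toFinsupp.coeff : ℕ →₀ k), (0 : ℕ →₀ k))) ∧
      opXsY k f = 0 ∧ f ∉ Set.range (opXsY k) := by
  set f : RatFunc k →ₗ[k] KleinM k :=
    { toFun := fun φ => (((polyPart φ).toFinsupp.coeff : ℕ →₀ k), (0 : ℕ →₀ k))
      map_add' := fun φ ψ => by
        simp [polyPart_add, Prod.ext_iff, Finsupp.ext_iff, Polynomial.toFinsupp_apply]
      map_smul' := fun c φ => by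
        simp [polyPart_smul, Prod.ext_iff, Finsupp.ext_iff, Polynomial.toFinsupp_apply] } with hf
  refine ⟨f, fun φ => rfl, ?_, ?_⟩
  · apply LinearMap.ext; intro φ
    have key := polyPart_X_mul_coeff φ
    simp only [opXsY, LinearMap.add_apply, LinearMap.comp_apply, LinearMap.mulLeft_apply,
      opX, opY, hf, LinearMap.coe_mk, AddHom.coe_mk, LinearMap.fst_apply, LinearMap.inr_apply,
      Finsupp.lcomapDomain, LinearMap.zero_apply, Prod.mk_add_mk, Prod.mk_eq_zero]
    constructor
    · simp
    · ext n
      simp only [Finsupp.add_apply, Finsupp.comapDomain_apply, Finsupp.coe_zero, Pi.zero_apply]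
      show (polyPart φ).coeff n + (polyPart (RatFunc.X * φ)).coeff (n + 1) = 0
      rw [key n, ← two_mul, show ((2 : k)) = 0 from by exact_mod_cast CharP.cast_eq_zero k 2,
        zero_mul]
  · rintro ⟨g, hg⟩
    have h1 : (f 1).1 = (opXsY k g 1).1 := by rw [hg]
    have h2 : (opXsY k g 1).1 = 0 := by
      simp [opXsY, opX, opY]
    rw [h2, hf] at h1
    simp only [LinearMap.coe_mk, AddHom.coe_mk] at h1
    have : polyPart (1 : RatFunc k) = 1 := by
      rw [polyPart, RatFunc.num_one, RatFunc.denom_one, Polynomial.divByMonic_one]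
    rw [this] at h1
    have h3 : (1 : Polynomial k).coeff 0 = 0 := DFunLike.congr_fun h1 0
    simp at h3
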